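/- For every triple of real numbers (a,b,c) ≠ (0,0,0) and all complex α, β, the three-tangle of the state α·v₁ + β·w₁ is zero; likewise, the three-tangle of α·v₂ + β·w₂ is zero. That is, every state in the two-dimensional invariant subspaces V₁ and V₂ has vanishing distributed entanglement τ = 0. -/

import Mathlib

open Matrix Complex

noncomputable section

/-- Index type for three qubits: `(ℂ²)^{⊗3} ≅ ℂ⁸` with basis `|jkl⟩`. -/
abbrev Q3 := Fin 2 × Fin 2 × Fin 2

/-- Pauli matrix σx. -/
def sx : Matrix (Fin 2) (Fin 2) ℂ := !![0, 1; 1, 0]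
/-- Pauli matrix σy. -/
def sy : Matrix (Fin 2) (Fin 2) ℂ := !![0, I; -I, 0]
/-- Pauli matrix σz. -/
def sz : Matrix (Fin 2) (Fin 2) ℂ := !![1, 0; 0, -1]

/-- Tensor (Kronecker) product of three 2×2 matrices, as an 8×8 matrix. -/
def tens3 (A B C : Matrix (Fin 2) (Fin 2) ℂ) : Matrix Q3 Q3 ℂ :=
  fun p q => A p.1 q.1 * B p.2.1 q.2.1 * C p.2.2 q.2.2

/-- Computational basis vector `|jkl⟩`. -/
def ket (j k l : Fin 2) : Q3 → ℂ := fun p => if p = (j, k, l) then 1 else 0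

/-- φ₀ = |000⟩. -/
def phi0 : Q3 → ℂ := ket 0 0 0
/-- φ₁ = |100⟩+|010⟩+|001⟩. -/
def phi1 : Q3 → ℂ := ket 1 0 0 + ket 0 1 0 + ket 0 0 1
/-- φ₂ = |110⟩+|011⟩+|101⟩. -/
def phi2 : Q3 → ℂ := ket 1 1 0 + ket 0 1 1 + ket 1 0 1
/-- φ₃ = |111⟩. -/
def phi3 : Q3 → ℂ := ket 1 1 1

/-- λ = 2√(3a²+3b²+3c²+3bc). -/
def lam (a b c : ℝ) : ℝ := 2 * Real.sqrt (3*a^2 + 3*b^2 + 3*c^2 + 3*b*c)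

def x2 (a b c : ℝ) : ℂ := (5/3 : ℂ) * (lam a b c : ℝ) - 6*(b:ℂ) - 2*I*(a:ℂ) - 2*(c:ℂ)
def x3 (a b c : ℝ) : ℂ := -((lam a b c : ℝ) : ℂ)/3 + 6*I*(a:ℂ) - 4*(c:ℂ) + 2*(b:ℂ)
def x5 (a b c : ℝ) : ℂ := -(x2 a b c + x3 a b c)
def x4 (a b c : ℝ) : ℂ := (5/3 : ℂ) * (lam a b c : ℝ) - 6*(c:ℂ) + 2*I*(a:ℂ) - 2*(b:ℂ)
def x6 (a b c : ℝ) : ℂ := -((lam a b c : ℝ) : ℂ)/3 - 6*I*(a:ℂ) - 4*(b:ℂ) + 2*(c:ℂ)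
def x7 (a b c : ℝ) : ℂ := -(x4 a b c + x6 a b c)

/-- v₁ = x₂|001⟩ + x₃|010⟩ + x₅|100⟩. -/
def v1 (a b c : ℝ) : Q3 → ℂ := x2 a b c • ket 0 0 1 + x3 a b c • ket 0 1 0 + x5 a b c • ket 1 0 0
/-- w₁ = x₄|011⟩ + x₆|101⟩ + x₇|110⟩. -/
def w1 (a b c : ℝ) : Q3 → ℂ := x4 a b c • ket 0 1 1 + x6 a b c • ket 1 0 1 + x7 a b c • ket 1 1 0

def y2 (a b c : ℝ) : ℂ := (5/3 : ℂ) * (lam a b c : ℝ) + 6*(b:ℂ) + 2*I*(a:ℂ) + 2*(c:ℂ)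
def y3 (a b c : ℝ) : ℂ := -((lam a b c : ℝ) : ℂ)/3 - 6*I*(a:ℂ) + 4*(c:ℂ) - 2*(b:ℂ)
def y5 (a b c : ℝ) : ℂ := -(y2 a b c + y3 a b c)
def y4 (a b c : ℝ) : ℂ := (5/3 : ℂ) * (lam a b c : ℝ) + 6*(c:ℂ) - 2*I*(a:ℂ) + 2*(b:ℂ)
def y6 (a b c : ℝ) : ℂ := -((lam a b c : ℝ) : ℂ)/3 + 6*I*(a:ℂ) + 4*(b:ℂ) - 2*(c:ℂ)
def y7 (a b c : ℝ) : ℂ := -(y4 a b c + y6 a b c)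

/-- v₂ = y₂|001⟩ + y₃|010⟩ + y₅|100⟩. -/
def v2 (a b c : ℝ) : Q3 → ℂ := y2 a b c • ket 0 0 1 + y3 a b c • ket 0 1 0 + y5 a b c • ket 1 0 0
/-- w₂ = y₄|011⟩ + y₆|101⟩ + y₇|110⟩. -/
def w2 (a b c : ℝ) : Q3 → ℂ := y4 a b c • ket 0 1 1 + y6 a b c • ket 1 0 1 + y7 a b c • ket 1 1 0

/-- The three-tangle (distributed entanglement) τ of a three-qubit pure state with
computational-basis coefficients t_{ijk} = ψ(i,j,k):
τ = 4|t₀₀₀²t₁₁₁² + t₀₀₁²t₁₁₀² + t₀₁₀²t₁₀₁² + t₁₀₀²t₀₁₁² − 2d₁ + 4d₂|. -/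
def tau (ψ : Q3 → ℂ) : ℝ :=
  4 * ‖(
    (ψ (0,0,0))^2 * (ψ (1,1,1))^2 + (ψ (0,0,1))^2 * (ψ (1,1,0))^2
    + (ψ (0,1,0))^2 * (ψ (1,0,1))^2 + (ψ (1,0,0))^2 * (ψ (0,1,1))^2
    - 2 * (ψ (0,0,0) * ψ (1,1,1) * ψ (0,1,1) * ψ (1,0,0)
         + ψ (0,0,0) * ψ (1,1,1) * ψ (1,0,1) * ψ (0,1,0)
         + ψ (0,0,0) * ψ (1,1,1) * ψ (1,1,0) * ψ (0,0,1)
         + ψ (0,1,1) * ψ (1,0,0) * ψ (1,0,1) * ψ (0,1,0)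
         + ψ (0,1,1) * ψ (1,0,0) * ψ (1,1,0) * ψ (0,0,1)
         + ψ (1,0,1) * ψ (0,1,0) * ψ (1,1,0) * ψ (0,0,1))
    + 4 * (ψ (0,0,0) * ψ (1,1,0) * ψ (1,0,1) * ψ (0,1,1)
         + ψ (1,1,1) * ψ (0,0,1) * ψ (0,1,0) * ψ (1,0,0)))‖

/-- for (a,b,c) ≠ (0,0,0) and all complex α, β, the three-tangle of
α·v₁ + β·w₁ and of α·v₂ + β·w₂ is zero: every state in the two-dimensional invariant
subspaces V₁ and V₂ has vanishing distributed entanglement. -/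
theorem statement13 (a b c : ℝ) (habc : (a, b, c) ≠ (0, 0, 0)) (α β : ℂ) :
    tau (α • v1 a b c + β • w1 a b c) = 0 ∧
    tau (α • v2 a b c + β • w2 a b c) = 0 := by
  have hrad : (0:ℝ) ≤ 3*a^2 + 3*b^2 + 3*c^2 + 3*b*c := by
    nlinarith [sq_nonneg (b + c), sq_nonneg b, sq_nonneg c, sq_nonneg a]
  have hL2 : (lam a b c)^2 = 12*(a^2 + b^2 + c^2 + b*c) := by
    rw [lam, mul_pow, Real.sq_sqrt hrad]; ring
  have hLC : ((lam a b c : ℝ) : ℂ)^2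
      = 12*((a:ℂ)^2 + (b:ℂ)^2 + (c:ℂ)^2 + (b:ℂ)*(c:ℂ)) := by
    exact_mod_cast congrArg (fun x : ℝ => (x : ℂ)) hL2
  constructor
  · set ψ := α • v1 a b c + β • w1 a b c with hψ
    have h000 : ψ (0,0,0) = 0 := by simp [hψ, v1, w1, ket, Prod.ext_iff]
    have h111 : ψ (1,1,1) = 0 := by simp [hψ, v1, w1, ket, Prod.ext_iff]
    have h001 : ψ (0,0,1) = α * x2 a b c := by simp [hψ, v1, w1, ket, Prod.ext_iff]
    have h010 : ψ (0,1,0) = α * x3 a b c := by simp [hψ, v1, w1, ket, Prod.ext_iff]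
    have h100 : ψ (1,0,0) = α * x5 a b c := by simp [hψ, v1, w1, ket, Prod.ext_iff]
    have h011 : ψ (0,1,1) = β * x4 a b c := by simp [hψ, v1, w1, ket, Prod.ext_iff]
    have h101 : ψ (1,0,1) = β * x6 a b c := by simp [hψ, v1, w1, ket, Prod.ext_iff]
    have h110 : ψ (1,1,0) = β * x7 a b c := by simp [hψ, v1, w1, ket, Prod.ext_iff]
    unfold tau
    rw [h000, h111, h001, h010, h100, h011, h101, h110]
    rw [mul_eq_zero]; right; rw [norm_eq_zero]
    unfold x5 x7 x2 x3 x4 x6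
    linear_combination (α^2*β^2*(((lam a b c : ℝ):ℂ)^2 + 12*(a:ℂ)^2 + 24*(a:ℂ)^2*I^2
        - 12*(b:ℂ)^2 - 12*(b:ℂ)*(c:ℂ) - 12*(c:ℂ)^2)) * hLC
      + (144*(a:ℂ)^4*α^2*β^2*(1 + I^2)) * Complex.I_sq
  · set ψ := α • v2 a b c + β • w2 a b c with hψ
    have h000 : ψ (0,0,0) = 0 := by simp [hψ, v2, w2, ket, Prod.ext_iff]
    have h111 : ψ (1,1,1) = 0 := by simp [hψ, v2, w2, ket, Prod.ext_iff]
    have h001 : ψ (0,0,1) = α * y2 a b c := by simp [hψ, v2, w2, ket, Prod.ext_iff]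
    have h010 : ψ (0,1,0) = α * y3 a b c := by simp [hψ, v2, w2, ket, Prod.ext_iff]
    have h100 : ψ (1,0,0) = α * y5 a b c := by simp [hψ, v2, w2, ket, Prod.ext_iff]
    have h011 : ψ (0,1,1) = β * y4 a b c := by simp [hψ, v2, w2, ket, Prod.ext_iff]
    have h101 : ψ (1,0,1) = β * y6 a b c := by simp [hψ, v2, w2, ket, Prod.ext_iff]
    have h110 : ψ (1,1,0) = β * y7 a b c := by simp [hψ, v2, w2, ket, Prod.ext_iff]
    unfold tau
    rw [h000, h111, h001, h010, h100, h011, h101, h110]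
    rw [mul_eq_zero]; right; rw [norm_eq_zero]
    unfold y5 y7 y2 y3 y4 y6
    linear_combination (α^2*β^2*(((lam a b c : ℝ):ℂ)^2 + 12*(a:ℂ)^2 + 24*(a:ℂ)^2*I^2
        - 12*(b:ℂ)^2 - 12*(b:ℂ)*(c:ℂ) - 12*(c:ℂ)^2)) * hLC
      + (144*(a:ℂ)^4*α^2*β^2*(1 + I^2)) * Complex.I_sq
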